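/- Let ξ : [0,∞) → ℝ be a càdlàg function, let α ∈ ℝ, x > 0, and set I = ∫_0^∞ e^{-α ξ(s)} ds ∈ (0, ∞]. Define τ_t = inf{ r ≥ 0 : ∫_0^r e^{-α ξ(s)} ds ≥ t } for t < I, and X(t) = x · e^{ξ(τ_{t x^α})} for t < ζ where ζ = x^{-α} I. Then for every q > 0, ∫_0^ζ X(t)^{α+q} dt = x^q ∫_0^∞ e^{q ξ(s)} ds (with both sides possibly infinite). -/

import Mathlib

open MeasureTheory Real Filter Topology
open scoped ENNReal

namespace LampertiAux

/-- The primitive `A r = ∫_0^r e^{-α ξ(s)} ds`. -/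
noncomputable def Aint (ξ : ℝ → ℝ) (α : ℝ) (r : ℝ) : ℝ :=
  ∫ s in Set.Ioc (0:ℝ) r, Real.exp (-(α * ξ s))

variable {ξ : ℝ → ℝ} {α : ℝ}

/-- A right-continuous function is measurable. -/
lemma meas_of_right (hright : ∀ s : ℝ, ContinuousWithinAt ξ (Set.Ici s) s) :
    Measurable ξ := by
  have hfl : ∀ n : ℕ, Measurable (fun s : ℝ => ξ (((⌊s * 2 ^ n⌋ : ℤ) + 1 : ℤ) / 2 ^ n)) := by
    intro n
    exact (measurable_of_countable (fun k : ℤ => ξ (((k + 1 : ℤ)) / 2 ^ n))).comp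
      (Int.measurable_floor.comp (measurable_id.mul_const _))
  apply measurable_of_tendsto_metrizable hfl
  rw [tendsto_pi_nhds]
  intro s
  have h2 : ∀ n : ℕ, (0:ℝ) < 2 ^ n := fun n => by positivity
  set g : ℕ → ℝ := fun n => (((⌊s * 2 ^ n⌋ : ℤ) + 1 : ℤ) : ℝ) / 2 ^ n with hg
  have hgs : ∀ n, s < g n := by
    intro n
    rw [hg, lt_div_iff₀ (h2 n)]
    push_cast
    exact Int.lt_floor_add_one _
  have hgu : ∀ n, g n ≤ s + ((2:ℝ)⁻¹) ^ n := by
    intro n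
    rw [hg, div_le_iff₀ (h2 n)]
    push_cast
    have := Int.floor_le (s * 2 ^ n)
    have h2n : ((2:ℝ)⁻¹) ^ n * 2 ^ n = 1 := by
      rw [← mul_pow]; norm_num
    nlinarith [h2 n]
  have hlim : Tendsto g atTop (𝓝 s) := by
    have hupper : Tendsto (fun n : ℕ => s + ((2:ℝ)⁻¹) ^ n) atTop (𝓝 (s + 0)) := by
      exact tendsto_const_nhds.add (tendsto_pow_atTop_nhds_zero_of_lt_one (by norm_num) (by norm_num))
    rw [add_zero] at hupper
    exact tendsto_of_tendsto_of_tendsto_of_le_of_le tendsto_const_nhds hupper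
      (fun n => (hgs n).le) hgu
  have hgin : Tendsto g atTop (𝓝[Set.Ici s] s) :=
    tendsto_nhdsWithin_iff.2 ⟨hlim, Eventually.of_forall (fun n => (hgs n).le)⟩
  exact ((hright s).tendsto).comp hgin

/-- A càdlàg function is bounded on `[0, r]`. -/
lemma bdd (hright : ∀ s : ℝ, ContinuousWithinAt ξ (Set.Ici s) s)
    (hleft : ∀ s : ℝ, 0 < s → ∃ l : ℝ, Tendsto ξ (nhdsWithin s (Set.Iio s)) (nhds l))
    (r : ℝ) : ∃ C : ℝ, 0 ≤ C ∧ ∀ s ∈ Set.Icc (0:ℝ) r, |ξ s| ≤ C := by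
  rcases lt_or_ge r 0 with h | h
  · exact ⟨0, le_refl _, fun s hs => absurd (hs.1.trans hs.2) (not_le.2 h)⟩
  have key : ∃ C : ℝ, ∀ s ∈ Set.Icc (0:ℝ) r, |ξ s| ≤ C := by
    refine isCompact_Icc.induction_on ⟨0, by simp⟩ ?_ ?_ ?_
    · rintro u v huv ⟨C, hC⟩
      exact ⟨C, fun s hs => hC s (huv hs)⟩
    · rintro u v ⟨C₁, hC₁⟩ ⟨C₂, hC₂⟩
      refine ⟨max C₁ C₂, fun s hs => ?_⟩
      rcases hs with hs | hs
      · exact (hC₁ s hs).trans (le_max_left _ _)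
      · exact (hC₂ s hs).trans (le_max_right _ _)
    · intro t ht
      have hball : ∀ᶠ y in 𝓝 (ξ t), |y| ≤ |ξ t| + 1 := by
        have : Metric.ball (ξ t) 1 ∈ 𝓝 (ξ t) := Metric.ball_mem_nhds _ one_pos
        filter_upwards [this] with y hy
        rw [Metric.mem_ball, Real.dist_eq] at hy
        have := abs_sub_abs_le_abs_sub y (ξ t)
        linarith
      have hR : ∀ᶠ s in 𝓝[Set.Ici t] t, |ξ s| ≤ |ξ t| + 1 := (hright t).tendsto.eventually hball
      rcases lt_or_ge 0 t with ht0 | ht0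
      · obtain ⟨l, hl⟩ := hleft t ht0
        have hballl : ∀ᶠ y in 𝓝 l, |y| ≤ |l| + 1 := by
          have : Metric.ball l 1 ∈ 𝓝 l := Metric.ball_mem_nhds _ one_pos
          filter_upwards [this] with y hy
          rw [Metric.mem_ball, Real.dist_eq] at hy
          have := abs_sub_abs_le_abs_sub y l
          linarith
        have hL : ∀ᶠ s in 𝓝[Set.Iio t] t, |ξ s| ≤ |l| + 1 := hl.eventually hballl
        set C := max (|ξ t| + 1) (|l| + 1) with hC
        have hnb : ∀ᶠ s in 𝓝 t, |ξ s| ≤ C := by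
          rw [← nhdsLT_sup_nhdsGE t]
          rw [eventually_sup]
          constructor
          · filter_upwards [hL] with s hs; exact hs.trans (le_max_right _ _)
          · filter_upwards [hR] with s hs; exact hs.trans (le_max_left _ _)
        refine ⟨{s | |ξ s| ≤ C}, ?_, C, fun s hs => hs⟩
        exact mem_nhdsWithin_of_mem_nhds hnb
      · have htz : t = 0 := le_antisymm ht0 ht.1
        refine ⟨{s | |ξ s| ≤ |ξ t| + 1}, ?_, |ξ t| + 1, fun s hs => hs⟩
        have h1 : {s | |ξ s| ≤ |ξ t| + 1} ∈ 𝓝[Set.Ici t] t := hR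
        exact nhdsWithin_mono t (by rw [htz]; exact Set.Icc_subset_Ici_self) h1
  obtain ⟨C, hC⟩ := key
  exact ⟨max C 0, le_max_right _ _, fun s hs => (hC s hs).trans (le_max_left _ _)⟩

lemma intOn (hright : ∀ s : ℝ, ContinuousWithinAt ξ (Set.Ici s) s)
    (hleft : ∀ s : ℝ, 0 < s → ∃ l : ℝ, Tendsto ξ (nhdsWithin s (Set.Iio s)) (nhds l))
    (r : ℝ) : IntegrableOn (fun s => Real.exp (-(α * ξ s))) (Set.Ioc (0:ℝ) r) := by
  rcases le_or_gt r 0 with h | h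
  · rw [Set.Ioc_eq_empty (by exact fun hlt => absurd (hlt.trans_le h) (lt_irrefl _))]
    exact integrableOn_empty
  obtain ⟨C, hC0, hC⟩ := bdd hright hleft r
  have hmeas : Measurable fun s => Real.exp (-(α * ξ s)) :=
    Real.measurable_exp.comp (((meas_of_right hright).const_mul α).neg)
  refine Measure.integrableOn_of_bounded (M := Real.exp (|α| * C)) measure_Ioc_lt_top.ne
    hmeas.aestronglyMeasurable ?_
  rw [ae_restrict_iff' measurableSet_Ioc]
  refine ae_of_all _ fun s hs => ?_
  rw [Real.norm_eq_abs, abs_of_pos (Real.exp_pos _), Real.exp_le_exp]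
  have h1 : |ξ s| ≤ C := hC s ⟨hs.1.le, hs.2⟩
  calc -(α * ξ s) ≤ |α * ξ s| := neg_le_abs _
    _ = |α| * |ξ s| := abs_mul _ _
    _ ≤ |α| * C := mul_le_mul_of_nonneg_left h1 (abs_nonneg _)

lemma Aint_zero : Aint ξ α 0 = 0 := by simp [Aint]

lemma Aint_add (hright : ∀ s : ℝ, ContinuousWithinAt ξ (Set.Ici s) s)
    (hleft : ∀ s : ℝ, 0 < s → ∃ l : ℝ, Tendsto ξ (nhdsWithin s (Set.Iio s)) (nhds l))
    {a b : ℝ} (ha : 0 ≤ a) (hab : a ≤ b) :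
    Aint ξ α b = Aint ξ α a + ∫ s in Set.Ioc a b, Real.exp (-(α * ξ s)) := by
  rw [Aint, Aint, ← Set.Ioc_union_Ioc_eq_Ioc ha hab]
  exact setIntegral_union (Set.Ioc_disjoint_Ioc_of_le le_rfl) measurableSet_Ioc
    ((intOn hright hleft a))
    ((intOn hright hleft b).mono_set (Set.Ioc_subset_Ioc_left ha))

lemma A_strictMono (hright : ∀ s : ℝ, ContinuousWithinAt ξ (Set.Ici s) s)
    (hleft : ∀ s : ℝ, 0 < s → ∃ l : ℝ, Tendsto ξ (nhdsWithin s (Set.Iio s)) (nhds l)) :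
    StrictMonoOn (Aint ξ α) (Set.Ici 0) := by
  intro a ha b hb hab
  rw [Aint_add hright hleft ha hab.le]
  obtain ⟨C, hC0, hC⟩ := bdd hright hleft b
  have hpos : 0 < ∫ s in Set.Ioc a b, Real.exp (-(α * ξ s)) := by
    have hge : Real.exp (-(|α| * C)) * (volume (Set.Ioc a b)).toReal
        ≤ ∫ s in Set.Ioc a b, Real.exp (-(α * ξ s)) := by
      refine setIntegral_ge_of_const_le_real measurableSet_Ioc measure_Ioc_lt_top.ne
        (fun s hs => ?_)
        ((intOn hright hleft b).mono_set (Set.Ioc_subset_Ioc_left ha))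
      rw [Real.exp_le_exp, neg_le_neg_iff]
      have h1 : |ξ s| ≤ C := hC s ⟨(ha.trans hs.1.le), hs.2⟩
      calc α * ξ s ≤ |α * ξ s| := le_abs_self _
        _ = |α| * |ξ s| := abs_mul _ _
        _ ≤ |α| * C := mul_le_mul_of_nonneg_left h1 (abs_nonneg _)
    have hvol : (volume (Set.Ioc a b)).toReal = b - a := by
      rw [Real.volume_Ioc, ENNReal.toReal_ofReal (by linarith)]
    rw [hvol] at hge
    have : 0 < Real.exp (-(|α| * C)) * (b - a) := mul_pos (Real.exp_pos _) (by linarith)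
    linarith
  linarith

lemma A_contOn (hright : ∀ s : ℝ, ContinuousWithinAt ξ (Set.Ici s) s)
    (hleft : ∀ s : ℝ, 0 < s → ∃ l : ℝ, Tendsto ξ (nhdsWithin s (Set.Iio s)) (nhds l))
    (b : ℝ) : ContinuousOn (Aint ξ α) (Set.Icc 0 b) := by
  obtain ⟨C, hC0, hC⟩ := bdd hright hleft b
  set K := Real.exp (|α| * C) with hK
  have haux : ∀ p ∈ Set.Icc (0:ℝ) b, ∀ q ∈ Set.Icc (0:ℝ) b, q ≤ p →
      |Aint ξ α p - Aint ξ α q| ≤ K * |p - q| := by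
    intro p hp q hq hqp
    have h1 : Aint ξ α p - Aint ξ α q = ∫ s in Set.Ioc q p, Real.exp (-(α * ξ s)) := by
      rw [Aint_add hright hleft hq.1 hqp]; ring
    rw [h1]
    have h2 : ‖∫ s in Set.Ioc q p, Real.exp (-(α * ξ s))‖
        ≤ K * (volume (Set.Ioc q p)).toReal := by
      refine norm_setIntegral_le_of_norm_le_const measure_Ioc_lt_top
        (fun s hs => ?_)
      rw [Real.norm_eq_abs, abs_of_pos (Real.exp_pos _), hK, Real.exp_le_exp]
      have h1' : |ξ s| ≤ C := hC s ⟨hq.1.trans hs.1.le, hs.2.trans hp.2⟩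
      calc -(α * ξ s) ≤ |α * ξ s| := neg_le_abs _
        _ = |α| * |ξ s| := abs_mul _ _
        _ ≤ |α| * C := mul_le_mul_of_nonneg_left h1' (abs_nonneg _)
    rw [Real.norm_eq_abs] at h2
    have hvol : (volume (Set.Ioc q p)).toReal = p - q := by
      rw [Real.volume_Ioc, ENNReal.toReal_ofReal (by linarith)]
    rw [hvol] at h2
    rwa [abs_of_nonneg (by linarith : (0:ℝ) ≤ p - q)]
  have hL : LipschitzOnWith (Real.toNNReal K) (Aint ξ α) (Set.Icc 0 b) := by
    apply LipschitzOnWith.of_dist_le_mul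
    intro p hp q hq
    rw [Real.dist_eq, Real.dist_eq, Real.coe_toNNReal _ (Real.exp_nonneg _)]
    rcases le_total q p with h | h
    · exact haux p hp q hq h
    · rw [← abs_neg (Aint ξ α p - Aint ξ α q), ← abs_neg (p - q)]
      simpa [neg_sub] using haux q hq p hp h
  exact hL.continuousOn

lemma A_deriv (hright : ∀ s : ℝ, ContinuousWithinAt ξ (Set.Ici s) s)
    (hleft : ∀ s : ℝ, 0 < s → ∃ l : ℝ, Tendsto ξ (nhdsWithin s (Set.Iio s)) (nhds l))
    {y : ℝ} (hy : 0 < y) (hcont : ContinuousAt ξ y) :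
    HasDerivAt (Aint ξ α) (Real.exp (-(α * ξ y))) y := by
  have hmeas : Measurable fun s => Real.exp (-(α * ξ s)) :=
    Real.measurable_exp.comp (((meas_of_right hright).const_mul α).neg)
  have hfc : ContinuousAt (fun s => Real.exp (-(α * ξ s))) y :=
    Real.continuous_exp.continuousAt.comp ((hcont.const_mul α).neg)
  have hint : IntervalIntegrable (fun s => Real.exp (-(α * ξ s))) volume 0 y :=
    (intervalIntegrable_iff_integrableOn_Ioc_of_le hy.le).2 (intOn hright hleft y)
  have hB := intervalIntegral.integral_hasDerivAt_right hint
    ⟨Set.univ, Filter.univ_mem, hmeas.aestronglyMeasurable⟩ hfc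
  apply hB.congr_of_eventuallyEq
  filter_upwards [Ioi_mem_nhds hy] with u hu
  rw [Aint, intervalIntegral.integral_of_le (le_of_lt hu)]

lemma lint_eq (hright : ∀ s : ℝ, ContinuousWithinAt ξ (Set.Ici s) s)
    (hleft : ∀ s : ℝ, 0 < s → ∃ l : ℝ, Tendsto ξ (nhdsWithin s (Set.Iio s)) (nhds l))
    (r : ℝ) :
    ∫⁻ s in Set.Ioc (0:ℝ) r, ENNReal.ofReal (Real.exp (-(α * ξ s)))
      = ENNReal.ofReal (Aint ξ α r) :=
  (ofReal_integral_eq_lintegral_ofReal (intOn hright hleft r)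
    (ae_of_all _ fun s => (Real.exp_nonneg _))).symm

lemma I_sup (hright : ∀ s : ℝ, ContinuousWithinAt ξ (Set.Ici s) s)
    (hleft : ∀ s : ℝ, 0 < s → ∃ l : ℝ, Tendsto ξ (nhdsWithin s (Set.Iio s)) (nhds l)) :
    ∫⁻ s in Set.Ioi (0:ℝ), ENNReal.ofReal (Real.exp (-(α * ξ s)))
      = ⨆ n : ℕ, ENNReal.ofReal (Aint ξ α n) := by
  have hU : Set.Ioi (0:ℝ) = ⋃ n : ℕ, Set.Ioc 0 (n:ℝ) := by
    ext u
    simp only [Set.mem_Ioi, Set.mem_iUnion, Set.mem_Ioc]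
    constructor
    · intro hu
      obtain ⟨n, hn⟩ := exists_nat_gt u
      exact ⟨n, hu, hn.le⟩
    · rintro ⟨n, hn, _⟩; exact hn
  rw [← withDensity_apply _ measurableSet_Ioi, hU,
    Directed.measure_iUnion (Monotone.directed_le
      (fun m n h => Set.Ioc_subset_Ioc_right (Nat.cast_le.2 h)))]
  congr 1
  ext n
  rw [withDensity_apply _ measurableSet_Ioc, lint_eq hright hleft]

/-- The discontinuity set of a càdlàg function is countable. -/
lemma countable_discont (hright : ∀ s : ℝ, ContinuousWithinAt ξ (Set.Ici s) s)
    (hleft : ∀ s : ℝ, 0 < s → ∃ l : ℝ, Tendsto ξ (nhdsWithin s (Set.Iio s)) (nhds l)) :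
    Set.Countable {t : ℝ | 0 < t ∧ ¬ ContinuousAt ξ t} := by
  classical
  set L : ℝ → ℝ := fun t => if h : 0 < t then (hleft t h).choose else 0 with hLdef
  have hLspec : ∀ t, 0 < t → Tendsto ξ (𝓝[Set.Iio t] t) (𝓝 (L t)) := by
    intro t ht
    simp only [hLdef, dif_pos ht]
    exact (hleft t ht).choose_spec
  have hcont : ∀ t, 0 < t → ξ t = L t → ContinuousAt ξ t := by
    intro t ht hEq
    have : Tendsto ξ (𝓝 t) (𝓝 (ξ t)) := by
      rw [← nhdsLT_sup_nhdsGE t, tendsto_sup]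
      exact ⟨hEq ▸ hLspec t ht, (hright t).tendsto⟩
    exact this
  have hsub : {t : ℝ | 0 < t ∧ ¬ ContinuousAt ξ t}
      ⊆ ⋃ n : ℕ, {t : ℝ | 0 < t ∧ 1/(n+1) ≤ |ξ t - L t|} := by
    rintro t ⟨ht, hnc⟩
    have hne : ξ t ≠ L t := fun h => hnc (hcont t ht h)
    obtain ⟨n, hn⟩ := exists_nat_one_div_lt (abs_pos.2 (sub_ne_zero.2 hne))
    exact Set.mem_iUnion.2 ⟨n, ht, hn.le⟩
  refine Set.Countable.mono hsub (Set.countable_iUnion fun n => ?_)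
  set ε : ℝ := 1/(n+1) with hεdef
  have hε : 0 < ε := by positivity
  set E : Set ℝ := {t : ℝ | 0 < t ∧ ε ≤ |ξ t - L t|} with hEdef
  -- isolation
  have key : ∀ t ∈ E, ∃ a b : ℝ, a < t ∧ t < b ∧ ∀ u ∈ E, u ∈ Set.Ioo a b → u = t := by
    rintro t ⟨ht0, htJ⟩
    have hball : ∀ z : ℝ, ∀ᶠ y in 𝓝 z, |y - z| < ε/3 := by
      intro z
      have : Metric.ball z (ε/3) ∈ 𝓝 z := Metric.ball_mem_nhds _ (by positivity)
      filter_upwards [this] with y hy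
      rwa [Metric.mem_ball, Real.dist_eq] at hy
    have h1 : ∀ᶠ s in 𝓝[Set.Ici t] t, |ξ s - ξ t| < ε/3 :=
      (hright t).tendsto.eventually (hball (ξ t))
    obtain ⟨b, hbt, hIb⟩ := mem_nhdsGE_iff_exists_Ico_subset.1 h1
    have h2 : ∀ᶠ s in 𝓝[Set.Iio t] t, |ξ s - L t| < ε/3 :=
      (hLspec t ht0).eventually (hball (L t))
    obtain ⟨a, hat, hIa⟩ := mem_nhdsLT_iff_exists_Ioo_subset.1 h2
    refine ⟨max a 0, b, max_lt hat ht0, hbt, ?_⟩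
    rintro u ⟨hu0, huJ⟩ hu
    by_contra hne
    rcases Ne.lt_or_gt hne with hut | htu
    · -- u < t
      have hau : a < u := lt_of_le_of_lt (le_max_left a 0) hu.1
      have hu1 : |ξ u - L t| < ε/3 := hIa ⟨hau, hut⟩
      have hev : ∀ᶠ s in 𝓝[Set.Iio u] u, |ξ s - L t| ≤ ε/3 := by
        filter_upwards [Ioo_mem_nhdsLT_of_mem (⟨hau, le_refl u⟩ : u ∈ Set.Ioc a u)]
          with s hs
        exact (hIa ⟨hs.1, hs.2.trans hut⟩).le
      have hLu : |L u - L t| ≤ ε/3 :=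
        le_of_tendsto (((hLspec u hu0).sub_const (L t)).abs) hev
      have := abs_sub_le (ξ u) (L t) (L u)
      rw [abs_sub_comm (L t) (L u)] at this
      linarith
    · -- t < u
      have hu1 : |ξ u - ξ t| < ε/3 := hIb ⟨htu.le, hu.2⟩
      have hev : ∀ᶠ s in 𝓝[Set.Iio u] u, |ξ s - ξ t| ≤ ε/3 := by
        filter_upwards [Ioo_mem_nhdsLT_of_mem (⟨htu, le_refl u⟩ : u ∈ Set.Ioc t u)]
          with s hs
        exact (hIb ⟨hs.1.le, hs.2.trans hu.2⟩).le
      have hLu : |L u - ξ t| ≤ ε/3 :=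
        le_of_tendsto (((hLspec u hu0).sub_const (ξ t)).abs) hev
      have := abs_sub_le (ξ u) (ξ t) (L u)
      rw [abs_sub_comm (ξ t) (L u)] at this
      linarith
  -- countability via rational intervals
  set S : ℚ × ℚ → Set ℝ := fun p =>
    {t | t ∈ E ∧ t ∈ Set.Ioo (p.1 : ℝ) (p.2 : ℝ) ∧
      ∀ u ∈ E, u ∈ Set.Ioo (p.1 : ℝ) (p.2 : ℝ) → u = t} with hSdef
  have hES : E ⊆ ⋃ p : ℚ × ℚ, S p := by
    intro t ht
    obtain ⟨a, b, hat, htb, hiso⟩ := key t ht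
    obtain ⟨q₁, hq₁a, hq₁t⟩ := exists_rat_btwn hat
    obtain ⟨q₂, hq₂t, hq₂b⟩ := exists_rat_btwn htb
    refine Set.mem_iUnion.2 ⟨(q₁, q₂), ht, ⟨hq₁t, hq₂t⟩, ?_⟩
    intro u hu huI
    exact hiso u hu ⟨hq₁a.trans huI.1, huI.2.trans hq₂b⟩
  refine Set.Countable.mono hES (Set.countable_iUnion fun p => ?_)
  apply Set.Subsingleton.countable
  rintro u ⟨huE, huI, _⟩ v ⟨hvE, hvI, hviso⟩
  exact hviso u huE huI

end LampertiAux

open LampertiAux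

/-- one-dimensional change of variables for lower integrals -/
lemma lintegral_image_eq_lintegral_abs_deriv_mul {s : Set ℝ} {f f' : ℝ → ℝ}
    (hs : MeasurableSet s) (hf' : ∀ x ∈ s, HasDerivWithinAt f (f' x) s x)
    (hf : Set.InjOn f s) (g : ℝ → ℝ≥0∞) :
    ∫⁻ x in f '' s, g x = ∫⁻ x in s, ENNReal.ofReal |f' x| * g (f x) := by
  simpa only [ContinuousLinearMap.det_toSpanSingleton] using
    MeasureTheory.lintegral_image_eq_lintegral_abs_det_fderiv_mul volume hs
      (fun x hx => (hf' x hx).hasFDerivWithinAt) hf g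

/-- Deterministic Lamperti change of variables: let `ξ` be càdlàg, `α ∈ ℝ`, `x > 0`,
`I = ∫_0^∞ e^{-αξ(s)} ds ∈ (0,∞]`, `τ_t = inf{r ≥ 0 : ∫_0^r e^{-αξ(s)} ds ≥ t}`,
`X(t) = x e^{ξ(τ_{t x^α})}` for `t < ζ := x^{-α} I`. Then for every `q > 0`,
`∫_0^ζ X(t)^{α+q} dt = x^q ∫_0^∞ e^{qξ(s)} ds` (possibly infinite on both sides). -/
theorem stmt14 (ξ : ℝ → ℝ)
    (hright : ∀ s : ℝ, ContinuousWithinAt ξ (Set.Ici s) s)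
    (hleft : ∀ s : ℝ, 0 < s →
      ∃ l : ℝ, Tendsto ξ (nhdsWithin s (Set.Iio s)) (nhds l))
    (α x q : ℝ) (hx : 0 < x) (hq : 0 < q) :
    ∀ (I : ℝ≥0∞), I = ∫⁻ s in Set.Ioi (0 : ℝ), ENNReal.ofReal (Real.exp (-(α * ξ s))) →
    ∀ (τ : ℝ → ℝ), τ = (fun t =>
      sInf {r : ℝ | 0 ≤ r ∧ t ≤ ∫ s in Set.Ioc (0 : ℝ) r, Real.exp (-(α * ξ s))}) →
    ∀ (X : ℝ → ℝ), X = (fun t => x * Real.exp (ξ (τ (t * x ^ α)))) →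
    ∀ (ζ : ℝ≥0∞), ζ = ENNReal.ofReal (x ^ (-α)) * I →
    (∫⁻ t in {t : ℝ | 0 ≤ t ∧ ENNReal.ofReal t < ζ}, ENNReal.ofReal (X t ^ (α + q)))
      = ENNReal.ofReal (x ^ q)
          * ∫⁻ s in Set.Ioi (0 : ℝ), ENNReal.ofReal (Real.exp (q * ξ s)) := by
  intro I hI τ hτ X hX ζ hζ
  set c : ℝ := x ^ (-α) with hc
  have hc0 : 0 < c := Real.rpow_pos_of_pos hx _
  set A : ℝ → ℝ := Aint ξ α with hA
  set F : ℝ → ℝ := fun y => c * A y with hF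
  -- τ ∘ A = id on Ioi 0
  have hAsm : StrictMonoOn A (Set.Ici 0) := A_strictMono hright hleft
  have htauA : ∀ y : ℝ, 0 < y → τ (A y) = y := by
    intro y hy
    rw [hτ]
    have hset : {r : ℝ | 0 ≤ r ∧ A y ≤ ∫ s in Set.Ioc (0:ℝ) r, Real.exp (-(α * ξ s))}
        = Set.Ici y := by
      ext r
      constructor
      · rintro ⟨hr0, hr⟩
        by_contra h
        rw [Set.mem_Ici] at h
        push_neg at h
        exact absurd hr (not_le.2 (hAsm (Set.mem_Ici.2 hr0) (Set.mem_Ici.2 hy.le) h))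
      · intro hr
        exact ⟨hy.le.trans hr, hAsm.monotoneOn (Set.mem_Ici.2 hy.le)
          (Set.mem_Ici.2 (hy.le.trans hr)) hr⟩
    show sInf {r : ℝ | 0 ≤ r ∧ A y ≤ ∫ s in Set.Ioc (0:ℝ) r, Real.exp (-(α * ξ s))} = y
    rw [hset, csInf_Ici]
  -- ζ as a sup
  have hζsup : ζ = ⨆ n : ℕ, ENNReal.ofReal (c * A n) := by
    rw [hζ, hI, I_sup hright hleft, ENNReal.mul_iSup]
    congr 1
    ext n
    rw [← ENNReal.ofReal_mul hc0.le]
  -- the image identity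
  have hFsm : StrictMonoOn F (Set.Ici 0) := by
    intro a ha b hb hab
    exact mul_lt_mul_of_pos_left (hAsm ha hb hab) hc0
  have hA0 : A 0 = 0 := Aint_zero
  have hApos : ∀ y : ℝ, 0 < y → 0 < A y := by
    intro y hy
    have := hAsm (Set.mem_Ici.2 (le_refl 0)) (Set.mem_Ici.2 hy.le) hy
    rwa [hA0] at this
  have hImg : F '' Set.Ioi 0 = {t : ℝ | 0 < t ∧ ENNReal.ofReal t < ζ} := by
    ext t
    constructor
    · rintro ⟨y, hy, rfl⟩
      rw [Set.mem_Ioi] at hy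
      have hFy : 0 < F y := mul_pos hc0 (hApos y hy)
      refine ⟨hFy, ?_⟩
      rw [hζsup]
      have hyn : y < (⌈y⌉₊ + 1 : ℕ) := by
        push_cast
        exact lt_of_le_of_lt (Nat.le_ceil y) (by linarith)
      have hlt : F y < c * A ((⌈y⌉₊ + 1 : ℕ) : ℝ) :=
        mul_lt_mul_of_pos_left (hAsm (Set.mem_Ici.2 hy.le)
          (Set.mem_Ici.2 (by positivity)) hyn) hc0
      exact lt_of_lt_of_le ((ENNReal.ofReal_lt_ofReal_iff_of_nonneg hFy.le).2 hlt)
        (le_iSup (fun n : ℕ => ENNReal.ofReal (c * A n)) (⌈y⌉₊ + 1))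
    · rintro ⟨ht0, htζ⟩
      rw [hζsup, lt_iSup_iff] at htζ
      obtain ⟨n, hn⟩ := htζ
      have htn : t < c * A n := (ENNReal.ofReal_lt_ofReal_iff_of_nonneg ht0.le).1 hn
      set u : ℝ := t / c with hu
      have hu0 : 0 < u := div_pos ht0 hc0
      have hun : u ≤ A n := by
        rw [hu, div_le_iff₀ hc0]
        linarith [mul_comm c (A n)]
      have humem : u ∈ Set.Icc (A 0) (A (n:ℝ)) := by
        rw [hA0]; exact ⟨hu0.le, hun⟩
      obtain ⟨y, hy, hyu⟩ := intermediate_value_Icc (by positivity : (0:ℝ) ≤ (n:ℝ))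
        ((A_contOn hright hleft (n:ℝ))) humem
      have hyu' : A y = u := hyu
      have hy0 : 0 < y := by
        rcases eq_or_lt_of_le hy.1 with h | h
        · exfalso
          rw [← h, hA0] at hyu'
          exact absurd hyu'.symm (ne_of_gt hu0)
        · exact h
      refine ⟨y, Set.mem_Ioi.2 hy0, ?_⟩
      show c * A y = t
      rw [hyu', hu, mul_div_cancel₀ _ (ne_of_gt hc0)]
  -- the good set s
  set Cs : Set ℝ := {y | ContinuousAt ξ y} with hCs
  set sgood : Set ℝ := Set.Ioi 0 ∩ Cs with hsgood
  have hsmeas : MeasurableSet sgood :=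
    measurableSet_Ioi.inter (IsGδ.setOf_continuousAt ξ).measurableSet
  have hDcnt : (Set.Ioi (0:ℝ) \ sgood).Countable := by
    refine Set.Countable.mono ?_ (countable_discont hright hleft)
    rintro t ⟨ht, hts⟩
    exact ⟨ht, fun hcont => hts ⟨ht, hcont⟩⟩
  have hsae : sgood =ᵐ[volume] Set.Ioi (0:ℝ) := by
    rw [ae_eq_set]
    constructor
    · rw [Set.diff_eq_empty.2 Set.inter_subset_left]
      exact measure_empty
    · exact hDcnt.measure_zero _
  -- derivatives
  have hF' : ∀ y ∈ sgood, HasDerivWithinAt F (c * Real.exp (-(α * ξ y))) sgood y := by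
    rintro y ⟨hy, hyc⟩
    exact ((A_deriv hright hleft hy hyc).const_mul c).hasDerivWithinAt
  have hFinj : Set.InjOn F sgood :=
    (hFsm.injOn).mono (Set.inter_subset_left.trans Set.Ioi_subset_Ici_self)
  -- first: replace the domain by F '' sgood
  set g : ℝ → ℝ≥0∞ := fun t => ENNReal.ofReal (X t ^ (α + q)) with hg
  have hres : volume.restrict {t : ℝ | 0 ≤ t ∧ ENNReal.ofReal t < ζ}
      = volume.restrict (F '' sgood) := by
    apply Measure.restrict_congr_set
    rw [ae_eq_set]
    constructor
    · -- S \ F '' sgood is null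
      apply measure_mono_null
        (?_ : {t : ℝ | 0 ≤ t ∧ ENNReal.ofReal t < ζ} \ F '' sgood
          ⊆ {0} ∪ F '' (Set.Ioi 0 \ sgood))
      · exact ((Set.countable_singleton 0).union (hDcnt.image F)).measure_zero _
      · rintro t ⟨⟨ht0, htζ⟩, htn⟩
        rcases eq_or_lt_of_le ht0 with h | h
        · exact Or.inl (by simp [← h])
        · have : t ∈ F '' Set.Ioi 0 := by rw [hImg]; exact ⟨h, htζ⟩
          obtain ⟨y, hy, rfl⟩ := this
          right
          refine ⟨y, ⟨hy, fun hys => htn ⟨y, hys, rfl⟩⟩, rfl⟩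
    · -- F '' sgood \ S is null (it is empty)
      have : F '' sgood ⊆ {t : ℝ | 0 ≤ t ∧ ENNReal.ofReal t < ζ} := by
        rintro t ⟨y, hy, rfl⟩
        have : F y ∈ F '' Set.Ioi 0 := ⟨y, hy.1, rfl⟩
        rw [hImg] at this
        exact ⟨this.1.le, this.2⟩
      rw [Set.diff_eq_empty.2 this]
      exact measure_empty
  calc (∫⁻ t in {t : ℝ | 0 ≤ t ∧ ENNReal.ofReal t < ζ}, g t)
      = ∫⁻ t in F '' sgood, g t := by rw [hres]
    _ = ∫⁻ y in sgood, ENNReal.ofReal |c * Real.exp (-(α * ξ y))| * g (F y) :=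
        _root_.lintegral_image_eq_lintegral_abs_deriv_mul hsmeas hF' hFinj g
    _ = ∫⁻ y in sgood, ENNReal.ofReal (x ^ q) * ENNReal.ofReal (Real.exp (q * ξ y)) := by
        refine setLIntegral_congr_fun hsmeas (fun y hy => ?_)
        have hy0 : 0 < y := hy.1
        -- compute g (F y)
        have harg : F y * x ^ α = A y := by
          rw [hF]
          show c * A y * x ^ α = A y
          rw [hc, mul_comm (x ^ (-α)) (A y), mul_assoc, ← Real.rpow_add hx]
          norm_num
        have hXF : X (F y) = x * Real.exp (ξ y) := by
          rw [hX]
          show x * Real.exp (ξ (τ (F y * x ^ α))) = x * Real.exp (ξ y)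
          rw [harg, htauA y hy0]
        have hgF : g (F y) = ENNReal.ofReal ((x * Real.exp (ξ y)) ^ (α + q)) := by
          rw [hg]
          show ENNReal.ofReal (X (F y) ^ (α + q)) = _
          rw [hXF]
        rw [hgF, abs_of_pos (by positivity : (0:ℝ) < c * Real.exp (-(α * ξ y))),
          ← ENNReal.ofReal_mul (by positivity), ← ENNReal.ofReal_mul (by positivity)]
        congr 1
        have hpow : (x * Real.exp (ξ y)) ^ (α + q)
            = x ^ (α + q) * Real.exp ((α + q) * ξ y) := by
          rw [Real.mul_rpow hx.le (Real.exp_nonneg _),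
            Real.rpow_def_of_pos (Real.exp_pos _), Real.log_exp, mul_comm (ξ y) (α + q)]
        rw [hpow, hc]
        have hxq : x ^ q = x ^ (-α) * x ^ (α + q) := by
          rw [← Real.rpow_add hx]; ring_nf
        have hexp : Real.exp (q * ξ y)
            = Real.exp (-(α * ξ y)) * Real.exp ((α + q) * ξ y) := by
          rw [← Real.exp_add]; ring_nf
        rw [hxq, hexp]
        ring
    _ = ∫⁻ y in Set.Ioi (0:ℝ),
          ENNReal.ofReal (x ^ q) * ENNReal.ofReal (Real.exp (q * ξ y)) := by
        rw [Measure.restrict_congr_set hsae]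
    _ = ENNReal.ofReal (x ^ q) * ∫⁻ s in Set.Ioi (0:ℝ),
          ENNReal.ofReal (Real.exp (q * ξ s)) :=
        lintegral_const_mul' _ _ ENNReal.ofReal_ne_top
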